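/- Under the Artin action of B_n on F_n, for a positive integer m the braid β(m) = σ_1^m ρ satisfies: a_1^{β(m)} = (a_3a_1^{-1})^{(m-1)/2} a_3 a_2^{-1} (a_3a_1^{-1})^{-(m-1)/2} if m is odd; a_1^{β(m)} = (a_3a_1^{-1})^{m/2} a_2 a_1^{-1} (a_3a_1^{-1})^{-m/2} if m is even; and a_i^{β(m)} = a_{i+1} a_1^{-1} for 2 ≤ i ≤ n-1. -/

import Mathlib

namespace Artin

/-- `A j` is the generator `a_j = ξ_1⋯ξ_j` of the free group `F_n` (with `A 0 = 1`). -/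
def A (j : ℕ) : FreeGroup ℕ := if j = 0 then 1 else FreeGroup.of j

/-- The effect of the Artin generator `σ_i` on the generators `a_j`. -/
def fwd (i : ℕ) : ℕ → FreeGroup ℕ := fun j =>
  if 1 ≤ i ∧ j = i then A (i + 1) * (A i)⁻¹ * A (i - 1) else FreeGroup.of j

/-- The effect of `σ_i⁻¹` on the generators `a_j`. -/
def bwd (i : ℕ) : ℕ → FreeGroup ℕ := fun j =>
  if 1 ≤ i ∧ j = i then A (i - 1) * (A i)⁻¹ * A (i + 1) else FreeGroup.of j

lemma lift_fwd_A (i k : ℕ) (h : k ≠ i) : FreeGroup.lift (fwd i) (A k) = A k := by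
  by_cases hk : k = 0
  · simp [A, hk]
  · simp only [A, if_neg hk, FreeGroup.lift_apply_of, fwd]
    rw [if_neg]
    rintro ⟨-, rfl⟩; exact h rfl

lemma lift_bwd_A (i k : ℕ) (h : k ≠ i) : FreeGroup.lift (bwd i) (A k) = A k := by
  by_cases hk : k = 0
  · simp [A, hk]
  · simp only [A, if_neg hk, FreeGroup.lift_apply_of, bwd]
    rw [if_neg]
    rintro ⟨-, rfl⟩; exact h rfl

lemma comp_bwd_fwd (i : ℕ) :
    (FreeGroup.lift (bwd i)).comp (FreeGroup.lift (fwd i)) = MonoidHom.id _ := by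
  apply FreeGroup.ext_hom
  intro j
  simp only [MonoidHom.comp_apply, FreeGroup.lift_apply_of, MonoidHom.id_apply]
  unfold fwd
  by_cases h : 1 ≤ i ∧ j = i
  · obtain ⟨hi, hji⟩ := h
    subst hji
    rw [if_pos ⟨hi, rfl⟩]
    have hj : A j = FreeGroup.of j := by simp only [A, if_neg (by omega : ¬ j = 0)]
    rw [map_mul, map_mul, map_inv]
    rw [lift_bwd_A j (j + 1) (by omega), lift_bwd_A j (j - 1) (by omega)]
    rw [← hj]
    have hAj : FreeGroup.lift (bwd j) (A j) = A (j - 1) * (A j)⁻¹ * A (j + 1) := by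
      rw [hj, FreeGroup.lift_apply_of, bwd, if_pos ⟨hi, rfl⟩, hj]
    rw [hAj]
    group
  · rw [if_neg h]
    simp only [FreeGroup.lift_apply_of, bwd]
    rw [if_neg h]

lemma comp_fwd_bwd (i : ℕ) :
    (FreeGroup.lift (fwd i)).comp (FreeGroup.lift (bwd i)) = MonoidHom.id _ := by
  apply FreeGroup.ext_hom
  intro j
  simp only [MonoidHom.comp_apply, FreeGroup.lift_apply_of, MonoidHom.id_apply]
  unfold bwd
  by_cases h : 1 ≤ i ∧ j = i
  · obtain ⟨hi, hji⟩ := h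
    subst hji
    rw [if_pos ⟨hi, rfl⟩]
    have hj : A j = FreeGroup.of j := by simp only [A, if_neg (by omega : ¬ j = 0)]
    rw [map_mul, map_mul, map_inv]
    rw [lift_fwd_A j (j + 1) (by omega), lift_fwd_A j (j - 1) (by omega)]
    rw [← hj]
    have hAj : FreeGroup.lift (fwd j) (A j) = A (j + 1) * (A j)⁻¹ * A (j - 1) := by
      rw [hj, FreeGroup.lift_apply_of, fwd, if_pos ⟨hi, rfl⟩, hj]
    rw [hAj]
    group
  · rw [if_neg h]
    simp only [FreeGroup.lift_apply_of, fwd]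
    rw [if_neg h]

/-- The automorphism of `F_n` given by the Artin generator `σ_i`. -/
def gen (i : ℕ) : MulAut (FreeGroup ℕ) where
  toFun := FreeGroup.lift (fwd i)
  invFun := FreeGroup.lift (bwd i)
  left_inv x := by
    have := DFunLike.congr_fun (comp_bwd_fwd i) x
    simpa using this
  right_inv x := by
    have := DFunLike.congr_fun (comp_fwd_bwd i) x
    simpa using this
  map_mul' := map_mul _

/-- The Artin representation, as a homomorphism from words in the braid generators
(`FreeGroup ℕ`, letter `i` standing for `σ_i`) to the opposite of `Aut(F_n)`;
the opposite group is used so that `w^{βγ} = (w^β)^γ`. -/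
def rep : FreeGroup ℕ →* (MulAut (FreeGroup ℕ))ᵐᵒᵖ :=
  FreeGroup.lift (fun i => MulOpposite.op (gen i))

/-- The (right) Artin action: `act b w = w^b`. -/
def act (b w : FreeGroup ℕ) : FreeGroup ℕ := (rep b).unop w


/-- The word `ρ = σ_{n-1} ⋯ σ_2 σ_1` in the braid generators. -/
def ρw (n : ℕ) : FreeGroup ℕ :=
  (((List.range (n - 1)).map (fun k => FreeGroup.of (k + 1))).reverse).prod

/-- The word `δ = σ_1 σ_2 ⋯ σ_{n-1}` in the braid generators. -/
def δw (n : ℕ) : FreeGroup ℕ :=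
  ((List.range (n - 1)).map (fun k => FreeGroup.of (k + 1))).prod

/-- The full-twist word `θ = (σ_1 ⋯ σ_{n-1})^n`. -/
def θw (n : ℕ) : FreeGroup ℕ := δw n ^ n

/-- The word `β(m) = σ_1^m ρ`. -/
def βw (n m : ℕ) : FreeGroup ℕ := FreeGroup.of 1 ^ m * ρw n

lemma act_of (i : ℕ) (w : FreeGroup ℕ) :
    act (FreeGroup.of i) w = FreeGroup.lift (fwd i) w := by
  simp only [act, rep, FreeGroup.lift_apply_of, MulOpposite.unop_op]
  rfl

lemma act_mul (b c w : FreeGroup ℕ) : act (b * c) w = act c (act b w) := by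
  simp only [act, map_mul, MulOpposite.unop_mul, MulAut.mul_apply]

lemma act_one (w : FreeGroup ℕ) : act 1 w = w := by
  simp only [act, map_one, MulOpposite.unop_one, MulAut.one_apply]

lemma act_mul' (b x y : FreeGroup ℕ) : act b (x * y) = act b x * act b y :=
  map_mul ((rep b).unop) x y

lemma act_inv' (b x : FreeGroup ℕ) : act b x⁻¹ = (act b x)⁻¹ :=
  map_inv ((rep b).unop) x

lemma act_zpow' (b x : FreeGroup ℕ) (z : ℤ) : act b (x ^ z) = act b x ^ z :=
  map_zpow ((rep b).unop) x z

lemma act_of_A_ne (i k : ℕ) (h : k ≠ i) : act (FreeGroup.of i) (A k) = A k := by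
  rw [act_of]; exact lift_fwd_A i k h

lemma act_of_A_eq (i : ℕ) (hi : 1 ≤ i) :
    act (FreeGroup.of i) (A i) = A (i + 1) * (A i)⁻¹ * A (i - 1) := by
  rw [act_of]
  have hA : A i = FreeGroup.of i := by simp only [A, if_neg (by omega : ¬ i = 0)]
  rw [hA, FreeGroup.lift_apply_of, fwd, if_pos ⟨hi, rfl⟩, ← hA]

/-- Partial products of `ρ`. -/
def Pw (t : ℕ) : FreeGroup ℕ :=
  (((List.range t).map (fun k => FreeGroup.of (k + 1))).reverse).prod

lemma Pw_zero : Pw 0 = 1 := by simp [Pw]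

lemma Pw_succ (t : ℕ) : Pw (t + 1) = FreeGroup.of (t + 1) * Pw t := by
  simp [Pw, List.range_succ]

lemma rhow_eq (n : ℕ) : ρw n = Pw (n - 1) := rfl

lemma Pw_fix : ∀ t k : ℕ, t < k → act (Pw t) (A k) = A k := by
  intro t
  induction t with
  | zero => intro k _; rw [Pw_zero, act_one]
  | succ t ih =>
      intro k hk
      rw [Pw_succ, act_mul, act_of_A_ne (t + 1) k (by omega), ih k (by omega)]

lemma Pw_act : ∀ t i : ℕ, i ≤ t → act (Pw t) (A i) = A (i + 1) * (A 1)⁻¹ := by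
  intro t
  induction t with
  | zero =>
      intro i hi
      interval_cases i
      rw [Pw_zero, act_one]
      simp [A]
  | succ t ih =>
      intro i hi
      rw [Pw_succ, act_mul]
      rcases Nat.lt_or_ge i (t + 1) with h | h
      · rw [act_of_A_ne (t + 1) i (by omega), ih i (by omega)]
      · have hit : i = t + 1 := by omega
        subst hit
        rw [act_of_A_eq (t + 1) (by omega)]
        rw [act_mul', act_mul', act_inv']
        rw [Pw_fix t (t + 1 + 1) (by omega), Pw_fix t (t + 1) (by omega)]
        have : t + 1 - 1 = t := by omega
        rw [this]
        rcases Nat.eq_zero_or_pos t with ht | ht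
        · subst ht
          rw [Pw_zero, act_one]
          simp [A]
        · rw [ih t le_rfl]
          group

lemma sig1_fix : ∀ (m k : ℕ), k ≠ 1 → act (FreeGroup.of 1 ^ m) (A k) = A k := by
  intro m
  induction m with
  | zero => intro k _; rw [pow_zero, act_one]
  | succ m ih =>
      intro k hk
      rw [pow_succ, act_mul, ih k hk, act_of_A_ne 1 k hk]

lemma sig1_pow_A1 : ∀ m : ℕ, act (FreeGroup.of 1 ^ m) (A 1) =
    A 2 ^ (((m + 1) / 2 : ℕ) : ℤ) * A 1 ^ (if Even m then (1 : ℤ) else -1) *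
      A 2 ^ (-((m / 2 : ℕ) : ℤ)) := by
  intro m
  induction m with
  | zero => rw [pow_zero, act_one]; norm_num
  | succ m ih =>
      rw [pow_succ, act_mul, ih]
      rw [act_mul', act_mul', act_zpow', act_zpow', act_zpow']
      rw [act_of_A_ne 1 2 (by omega), act_of_A_eq 1 le_rfl]
      have hA0 : A 0 = 1 := by simp [A]
      rw [hA0, mul_one]
      rcases Nat.even_or_odd m with he | ho
      · obtain ⟨k, rfl⟩ := he
        rw [if_pos (by exact ⟨k, rfl⟩), if_neg (by simp [Nat.even_add_one, parity_simps])]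
        have h1 : (k + k + 1) / 2 = k := by omega
        have h2 : (k + k) / 2 = k := by omega
        have h3 : (k + k + 1 + 1) / 2 = k + 1 := by omega
        rw [h1, h2, h3]
        push_cast
        group
      · obtain ⟨k, rfl⟩ := ho
        rw [if_neg (by simp [parity_simps]), if_pos (by simp [parity_simps])]
        have h1 : (2 * k + 1 + 1) / 2 = k + 1 := by omega
        have h2 : (2 * k + 1) / 2 = k := by omega
        have h3 : (2 * k + 1 + 1 + 1) / 2 = k + 1 := by omega
        rw [h1, h2, h3]
        push_cast
        group

/-- under the Artin action, for a positive integer `m` the braid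
`β(m) = σ_1^m ρ` satisfies:
`a_1^{β(m)} = (a_3 a_1⁻¹)^{(m-1)/2} (a_3 a_2⁻¹) (a_3 a_1⁻¹)^{-(m-1)/2}` if `m` is odd,
`a_1^{β(m)} = (a_3 a_1⁻¹)^{m/2} (a_2 a_1⁻¹) (a_3 a_1⁻¹)^{-m/2}` if `m` is even, and
`a_i^{β(m)} = a_{i+1} a_1⁻¹` for `2 ≤ i ≤ n-1`. -/
theorem beta_action (n : ℕ) (hn : 3 ≤ n) (m : ℕ) (hm : 1 ≤ m) :
    (Odd m → act (βw n m) (A 1) =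
      (A 3 * (A 1)⁻¹) ^ ((m - 1) / 2) * (A 3 * (A 2)⁻¹) *
        ((A 3 * (A 1)⁻¹) ^ ((m - 1) / 2))⁻¹) ∧
    (Even m → act (βw n m) (A 1) =
      (A 3 * (A 1)⁻¹) ^ (m / 2) * (A 2 * (A 1)⁻¹) * ((A 3 * (A 1)⁻¹) ^ (m / 2))⁻¹) ∧
    (∀ i, 2 ≤ i → i ≤ n - 1 → act (βw n m) (A i) = A (i + 1) * (A 1)⁻¹) := by
  refine ⟨?_, ?_, ?_⟩
  · rintro ⟨k, rfl⟩
    rw [βw, act_mul, sig1_pow_A1, rhow_eq]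
    rw [if_neg (by simp [parity_simps])]
    have h1 : (2 * k + 1 + 1) / 2 = k + 1 := by omega
    have h2 : (2 * k + 1) / 2 = k := by omega
    have h3 : (2 * k + 1 - 1) / 2 = k := by omega
    rw [h1, h2, h3]
    rw [act_mul', act_mul', act_zpow', act_zpow', act_zpow']
    rw [Pw_act (n - 1) 1 (by omega), Pw_act (n - 1) 2 (by omega)]
    simp only [zpow_neg, zpow_natCast, zpow_one]
    rw [pow_succ]
    rw [mul_assoc ((A 3 * (A 1)⁻¹) ^ k) (A 3 * (A 1)⁻¹) ((A 2 * (A 1)⁻¹)⁻¹)]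
    have hc : (A 3 * (A 1)⁻¹) * (A 2 * (A 1)⁻¹)⁻¹ = A 3 * (A 2)⁻¹ := by group
    rw [hc]
  · rintro ⟨k, rfl⟩
    rw [βw, act_mul, sig1_pow_A1, rhow_eq]
    rw [if_pos ⟨k, rfl⟩]
    have h1 : (k + k + 1) / 2 = k := by omega
    have h2 : (k + k) / 2 = k := by omega
    rw [h1, h2]
    rw [act_mul', act_mul', act_zpow', act_zpow', act_zpow']
    rw [Pw_act (n - 1) 1 (by omega), Pw_act (n - 1) 2 (by omega)]
    simp only [zpow_neg, zpow_natCast, zpow_one]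
  · intro i h2 h3
    rw [βw, act_mul, sig1_fix m i (by omega), rhow_eq,
      Pw_act (n - 1) i (by omega)]

end Artin
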